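/- Positive integers k and n satisfy (k!)^n - k^(n!) = (n!)^k - n^(k!) if and only if k = n or (k, n) = (1, 2) or (k, n) = (2, 1). -/

import Mathlib

lemma fac_le_pow_pred : ∀ k : ℕ, 1 ≤ k → Nat.factorial k ≤ k ^ (k - 1) := by
  intro k
  induction k with
  | zero => intro h; omega
  | succ m ih =>
    intro _
    rcases Nat.eq_zero_or_pos m with hm | hm
    · subst hm; simp [Nat.factorial]
    · have h1 : Nat.factorial m ≤ m ^ (m - 1) := ih hm
      have h2 : m ^ (m - 1) ≤ (m + 1) ^ (m - 1) := Nat.pow_le_pow_left (by omega) _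
      calc Nat.factorial (m + 1) = (m + 1) * Nat.factorial m := rfl
        _ ≤ (m + 1) * (m + 1) ^ (m - 1) := by
            exact Nat.mul_le_mul_left _ (le_trans h1 h2)
        _ = (m + 1) ^ (m - 1 + 1) := by ring
        _ = (m + 1) ^ (m + 1 - 1) := by congr 1; omega

lemma key (k n : ℕ) (hk : 2 ≤ k) (hkn : k < n) :
    (Nat.factorial k) ^ n + n ^ (Nat.factorial k)
      < (Nat.factorial n) ^ k + k ^ (Nat.factorial n) := by
  have hn3 : 3 ≤ n := by omega
  -- n! ≥ n * k!
  have h1 : n * Nat.factorial k ≤ Nat.factorial n := by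
    have : Nat.factorial k ≤ Nat.factorial (n - 1) := Nat.factorial_le (by omega)
    calc n * Nat.factorial k ≤ n * Nat.factorial (n - 1) := Nat.mul_le_mul_left _ this
      _ = Nat.factorial n := by
          have h : n = (n - 1) + 1 := by omega
          conv_rhs => rw [h, Nat.factorial_succ]
          rw [← h]
  -- 2n ≤ 2^n
  have h2n : 2 * n ≤ 2 ^ n := by
    have := Nat.lt_two_pow_self (n := n - 1)
    have hn' : n ≤ 2 ^ (n - 1) := by omega
    calc 2 * n ≤ 2 * 2 ^ (n - 1) := by omega
      _ = 2 ^ (n - 1 + 1) := by ring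
      _ = 2 ^ n := by congr 1; omega
  -- 2 * n^(k!) ≤ k^(n!)
  have h2 : 2 * n ^ Nat.factorial k ≤ k ^ Nat.factorial n := by
    have hkf : 1 ≤ Nat.factorial k := Nat.factorial_pos k
    calc 2 * n ^ Nat.factorial k
        ≤ 2 ^ Nat.factorial k * n ^ Nat.factorial k := by
          have : 2 ≤ 2 ^ Nat.factorial k := by
            calc 2 = 2 ^ 1 := rfl
              _ ≤ 2 ^ Nat.factorial k := Nat.pow_le_pow_right (by norm_num) hkf
          exact Nat.mul_le_mul_right _ this
      _ = (2 * n) ^ Nat.factorial k := by rw [Nat.mul_pow]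
      _ ≤ (2 ^ n) ^ Nat.factorial k := Nat.pow_le_pow_left h2n _
      _ = 2 ^ (n * Nat.factorial k) := by rw [← Nat.pow_mul]
      _ ≤ 2 ^ Nat.factorial n := Nat.pow_le_pow_right (by norm_num) h1
      _ ≤ k ^ Nat.factorial n := Nat.pow_le_pow_left hk _
  -- 2 * (k!)^n ≤ k^(n!)
  have h3 : 2 * (Nat.factorial k) ^ n ≤ k ^ Nat.factorial n := by
    have hfk : Nat.factorial k ≤ k ^ (k - 1) := fac_le_pow_pred k (by omega)
    have hexp : (k - 1) * n + 1 ≤ Nat.factorial n := by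
      have hkk : k ≤ Nat.factorial k := Nat.self_le_factorial k
      obtain ⟨m, rfl⟩ : ∃ m, k = m + 1 := ⟨k - 1, by omega⟩
      simp only [Nat.add_sub_cancel]
      nlinarith [h1, Nat.factorial_pos (m + 1)]
    calc 2 * (Nat.factorial k) ^ n
        ≤ k * (k ^ (k - 1)) ^ n := by
          exact Nat.mul_le_mul (by omega) (Nat.pow_le_pow_left hfk _)
      _ = k ^ ((k - 1) * n + 1) := by rw [← Nat.pow_mul]; ring
      _ ≤ k ^ Nat.factorial n := Nat.pow_le_pow_right (by omega) hexp
  have h4 : 1 ≤ (Nat.factorial n) ^ k := Nat.one_le_pow _ _ (Nat.factorial_pos n)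
  omega

lemma fac_eq_self {n : ℕ} (hn : 0 < n) (h : Nat.factorial n = n) : n = 1 ∨ n = 2 := by
  by_contra hcon
  push_neg at hcon
  have h3 : 3 ≤ n := by omega
  have := Nat.lt_factorial_self h3
  omega

theorem stmt_10 (k n : ℕ) (hk : 0 < k) (hn : 0 < n) :
    ((Nat.factorial k : ℤ) ^ n - (k : ℤ) ^ (Nat.factorial n) =
      (Nat.factorial n : ℤ) ^ k - (n : ℤ) ^ (Nat.factorial k)) ↔
    (k = n ∨ (k = 1 ∧ n = 2) ∨ (k = 2 ∧ n = 1)) := by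
  constructor
  · intro heq
    have heq' : ((Nat.factorial k : ℤ)) ^ n + (n : ℤ) ^ (Nat.factorial k)
        = (Nat.factorial n : ℤ) ^ k + (k : ℤ) ^ (Nat.factorial n) := by linarith
    rcases lt_trichotomy k n with h | h | h
    · rcases Nat.lt_or_ge k 2 with hk2 | hk2
      · -- k = 1
        have hk1 : k = 1 := by omega
        subst hk1
        simp [Nat.factorial] at heq'
        have hfn : Nat.factorial n = n := by
          have := heq'
          exact_mod_cast by linarith
        rcases fac_eq_self hn hfn with h1 | h2
        · omega
        · right; left; exact ⟨rfl, h2⟩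
      · exfalso
        have := key k n hk2 h
        have : ((Nat.factorial k : ℤ)) ^ n + (n : ℤ) ^ (Nat.factorial k)
            < (Nat.factorial n : ℤ) ^ k + (k : ℤ) ^ (Nat.factorial n) := by
          exact_mod_cast this
        linarith
    · left; exact h
    · rcases Nat.lt_or_ge n 2 with hn2 | hn2
      · -- n = 1
        have hn1 : n = 1 := by omega
        subst hn1
        simp [Nat.factorial] at heq'
        have hfk : Nat.factorial k = k := by
          have := heq'
          exact_mod_cast by linarith
        rcases fac_eq_self hk hfk with h1 | h2
        · omega
        · right; right; exact ⟨h2, rfl⟩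
      · exfalso
        have := key n k hn2 h
        have : ((Nat.factorial n : ℤ)) ^ k + (k : ℤ) ^ (Nat.factorial n)
            < (Nat.factorial k : ℤ) ^ n + (n : ℤ) ^ (Nat.factorial k) := by
          exact_mod_cast this
        linarith
  · rintro (rfl | ⟨rfl, rfl⟩ | ⟨rfl, rfl⟩)
    · ring
    · norm_num [Nat.factorial]
    · norm_num [Nat.factorial]
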